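/- For a discounted MDP with finite state and action spaces, the expected cumulative discounted advantage of a policy π' under the value functions of policy π equals the performance difference: J_{π'} − J_π = E_{π'}[ Σ_{k=0}^{∞} γ^k A_π(S_k, a_k) ], where A_π(s,a) = q_π(s,a) − v_π(s). -/
import Mathlib


/-- State distribution at step `k` under policy `pol` starting from `μ`. -/
noncomputable def stateDist {S A : Type*} [Fintype S] [Fintype A]
    (P : S → A → S → ℝ) (pol : S → A → ℝ) (μ : S → ℝ) : ℕ → S → ℝ
  | 0 => μ
  | (k + 1) => fun s' => ∑ s, ∑ a, stateDist P pol μ k s * pol s a * P s a s'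

/-- Performance difference lemma: `J_{π'} − J_π` equals the expected cumulative
discounted advantage of `π'` evaluated with the value functions of `π`. -/
theorem performance_difference
    {S A : Type*} [Fintype S] [Fintype A]
    (P : S → A → S → ℝ) (hP0 : ∀ s a s', 0 ≤ P s a s') (hP1 : ∀ s a, ∑ s', P s a s' = 1)
    (r : S → A → ℝ) (γ : ℝ) (hγ0 : 0 ≤ γ) (hγ1 : γ < 1)
    (μ : S → ℝ) (hμ0 : ∀ s, 0 ≤ μ s) (hμ1 : ∑ s, μ s = 1)
    (pol pol' : S → A → ℝ)
    (hpol0 : ∀ s a, 0 ≤ pol s a) (hpol1 : ∀ s, ∑ a, pol s a = 1)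
    (hpol'0 : ∀ s a, 0 ≤ pol' s a) (hpol'1 : ∀ s, ∑ a, pol' s a = 1)
    (v v' : S → ℝ) (q : S → A → ℝ)
    (hv : ∀ s, v s = ∑ a, pol s a * (r s a + γ * ∑ s', P s a s' * v s'))
    (hv' : ∀ s, v' s = ∑ a, pol' s a * (r s a + γ * ∑ s', P s a s' * v' s'))
    (hq : ∀ s a, q s a = r s a + γ * ∑ s', P s a s' * v s') :
    (∑ s, μ s * v' s) - (∑ s, μ s * v s)
      = ∑' k : ℕ, γ ^ k *
          ∑ s, ∑ a, stateDist P pol' μ k s * pol' s a * (q s a - v s) := by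
  classical
  set d := stateDist P pol' μ with hd
  have hdsucc : ∀ k s', d (k + 1) s' = ∑ s, ∑ a, d k s * pol' s a * P s a s' :=
    fun k s' => rfl
  set E : S → ℝ := fun s => v' s - v s with hE
  set D : ℕ → ℝ := fun k => ∑ s, d k s * E s with hD
  -- nonnegativity and normalization of d
  have hd0 : ∀ k s, 0 ≤ d k s := by
    intro k
    induction k with
    | zero => exact hμ0
    | succ k ih =>
      intro s'
      rw [hdsucc]
      refine Finset.sum_nonneg fun s _ => Finset.sum_nonneg fun a _ => ?_
      have := ih s
      have := hpol'0 s a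
      have := hP0 s a s'
      positivity
  have hd1 : ∀ k, ∑ s, d k s = 1 := by
    intro k
    induction k with
    | zero => exact hμ1
    | succ k ih =>
      calc ∑ s', d (k+1) s' = ∑ s', ∑ s, ∑ a, d k s * pol' s a * P s a s' := by
            exact Finset.sum_congr rfl fun s' _ => hdsucc k s'
        _ = ∑ s, ∑ a, ∑ s', d k s * pol' s a * P s a s' := by
            rw [Finset.sum_comm]
            exact Finset.sum_congr rfl fun s _ => Finset.sum_comm
        _ = ∑ s, ∑ a, d k s * pol' s a := by
            refine Finset.sum_congr rfl fun s _ => Finset.sum_congr rfl fun a _ => ?_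
            rw [← Finset.mul_sum, hP1, mul_one]
        _ = ∑ s, d k s := by
            refine Finset.sum_congr rfl fun s _ => ?_
            rw [← Finset.mul_sum, hpol'1, mul_one]
        _ = 1 := ih
  -- key one-step identity
  have hstep : ∀ k, (∑ s, ∑ a, d k s * pol' s a * (q s a - v s)) = D k - γ * D (k + 1) := by
    intro k
    have hq' : ∀ s a, q s a - v s
        = ((r s a + γ * ∑ s', P s a s' * v' s') - v s) - γ * ∑ s', P s a s' * E s' := by
      intro s a
      have hsub : ∑ s', P s a s' * v' s' - ∑ s', P s a s' * E s' = ∑ s', P s a s' * v s' := by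
        rw [← Finset.sum_sub_distrib]
        exact Finset.sum_congr rfl fun s' _ => by simp [hE]; ring
      rw [hq, ← hsub]; ring
    have hDk1 : D (k+1) = ∑ s, ∑ a, d k s * pol' s a * ∑ s', P s a s' * E s' := by
      calc D (k+1) = ∑ s', (∑ s, ∑ a, d k s * pol' s a * P s a s') * E s' := by
            exact Finset.sum_congr rfl fun s' _ => by rw [hdsucc]
        _ = ∑ s', ∑ s, ∑ a, d k s * pol' s a * (P s a s' * E s') := by
            refine Finset.sum_congr rfl fun s' _ => ?_
            rw [Finset.sum_mul]
            exact Finset.sum_congr rfl fun s _ => by rw [Finset.sum_mul]; exact Finset.sum_congr rfl fun a _ => by ring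
        _ = ∑ s, ∑ a, ∑ s', d k s * pol' s a * (P s a s' * E s') := by
            rw [Finset.sum_comm]
            exact Finset.sum_congr rfl fun s _ => Finset.sum_comm
        _ = ∑ s, ∑ a, d k s * pol' s a * ∑ s', P s a s' * E s' := by
            refine Finset.sum_congr rfl fun s _ => Finset.sum_congr rfl fun a _ => ?_
            rw [Finset.mul_sum]
    calc (∑ s, ∑ a, d k s * pol' s a * (q s a - v s))
        = ∑ s, ∑ a, (d k s * (pol' s a * (r s a + γ * ∑ s', P s a s' * v' s'))
            - d k s * v s * pol' s a
            - γ * (d k s * pol' s a * ∑ s', P s a s' * E s')) := by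
          refine Finset.sum_congr rfl fun s _ => Finset.sum_congr rfl fun a _ => ?_
          rw [hq' s a]; ring
      _ = ∑ s, (d k s * v' s - d k s * v s
            - γ * ∑ a, d k s * pol' s a * ∑ s', P s a s' * E s') := by
          refine Finset.sum_congr rfl fun s _ => ?_
          rw [Finset.sum_sub_distrib, Finset.sum_sub_distrib, ← Finset.mul_sum, ← hv' s,
            ← Finset.mul_sum, hpol'1, mul_one, ← Finset.mul_sum]
      _ = D k - γ * D (k+1) := by
          rw [hDk1, hD]
          rw [Finset.mul_sum, ← Finset.sum_sub_distrib]
          refine Finset.sum_congr rfl fun s _ => ?_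
          simp only [hE]; ring
  -- bound on D
  set C : ℝ := ∑ s, |E s| with hC
  have hC0 : 0 ≤ C := Finset.sum_nonneg fun s _ => abs_nonneg _
  have hDb : ∀ k, |D k| ≤ C := by
    intro k
    calc |D k| ≤ ∑ s, |d k s * E s| := Finset.abs_sum_le_sum_abs _ _
      _ ≤ ∑ s, |E s| := by
          refine Finset.sum_le_sum fun s _ => ?_
          rw [abs_mul, abs_of_nonneg (hd0 k s)]
          have hle1 : d k s ≤ 1 := by
            have := Finset.single_le_sum (f := d k) (fun i _ => hd0 k i) (Finset.mem_univ s)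
            rw [hd1 k] at this; exact this
          nlinarith [abs_nonneg (E s)]
  have hγabs : |γ| < 1 := by rw [abs_of_nonneg hγ0]; exact hγ1
  -- term rewrite
  have hterm : ∀ k, γ ^ k * (∑ s, ∑ a, d k s * pol' s a * (q s a - v s))
      = γ ^ k * D k - γ ^ (k+1) * D (k+1) := by
    intro k; rw [hstep]; ring
  -- tendsto of γ^k * D k to 0
  have htend : Filter.Tendsto (fun k => γ ^ k * D k) Filter.atTop (nhds 0) := by
    refine squeeze_zero_norm (a := fun k => γ ^ k * C) (fun k => ?_) ?_
    · show ‖γ ^ k * D k‖ ≤ γ ^ k * C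
      rw [Real.norm_eq_abs, abs_mul, abs_pow, abs_of_nonneg hγ0]
      exact mul_le_mul_of_nonneg_left (hDb k) (pow_nonneg hγ0 k)
    · have := tendsto_pow_atTop_nhds_zero_of_lt_one hγ0 hγ1
      simpa using this.mul_const C
  -- summability
  have hsummable : Summable (fun k => γ ^ k * D k - γ ^ (k+1) * D (k+1)) := by
    apply Summable.of_norm_bounded (g := fun k => γ ^ k * ((1 + γ) * C))
    · exact (summable_geometric_of_lt_one hγ0 hγ1).mul_right _
    · intro k
      rw [Real.norm_eq_abs]
      calc |γ ^ k * D k - γ ^ (k+1) * D (k+1)|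
          ≤ |γ ^ k * D k| + |γ ^ (k+1) * D (k+1)| := abs_sub _ _
        _ ≤ γ ^ k * C + γ ^ (k+1) * C := by
            gcongr
            · rw [abs_mul, abs_pow, abs_of_nonneg hγ0]
              exact mul_le_mul_of_nonneg_left (hDb k) (pow_nonneg hγ0 k)
            · rw [abs_mul, abs_pow, abs_of_nonneg hγ0]
              exact mul_le_mul_of_nonneg_left (hDb (k+1)) (pow_nonneg hγ0 (k+1))
        _ = γ ^ k * ((1 + γ) * C) := by ring
  -- telescoping sum equals D 0
  have htsum : (∑' k : ℕ, (γ ^ k * D k - γ ^ (k+1) * D (k+1))) = D 0 := by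
    have h1 := hsummable.hasSum.tendsto_sum_nat
    have h2 : Filter.Tendsto (fun n => ∑ k ∈ Finset.range n, (γ ^ k * D k - γ ^ (k+1) * D (k+1)))
        Filter.atTop (nhds (D 0)) := by
      have heq : ∀ n, ∑ k ∈ Finset.range n, (γ ^ k * D k - γ ^ (k+1) * D (k+1))
          = γ ^ 0 * D 0 - γ ^ n * D n := fun n => Finset.sum_range_sub' (fun k => γ ^ k * D k) n
      simp only [heq, pow_zero, one_mul]
      simpa using (tendsto_const_nhds (x := D 0)).sub htend
    exact tendsto_nhds_unique h1 h2
  calc (∑ s, μ s * v' s) - (∑ s, μ s * v s)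
      = D 0 := by
        rw [hD, ← Finset.sum_sub_distrib]
        exact Finset.sum_congr rfl fun s _ => by simp [hE, hd, stateDist]; ring
    _ = ∑' k : ℕ, (γ ^ k * D k - γ ^ (k+1) * D (k+1)) := htsum.symm
    _ = ∑' k : ℕ, γ ^ k * ∑ s, ∑ a, d k s * pol' s a * (q s a - v s) :=
        tsum_congr fun k => (hterm k).symm
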